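/- Let K* ⊆ K** be fields with K* relatively algebraically closed in K** (every element of K** algebraic over K* lies in K*). Let f ∈ K*[X_1,…,X_r] be an irreducible polynomial with constant coefficient 1. Then f remains irreducible in K**[X_1,…,X_r]. -/

import Mathlib

open MvPolynomial

/-- descend: polynomial with coefficients in range of φ comes from downstairs -/
lemma descend_aux {R S : Type*} [CommSemiring R] [CommSemiring S] {σ : Type*}
    (φ : R →+* S) (p : MvPolynomial σ S) (h : ∀ m, p.coeff m ∈ Set.range φ) :
    ∃ q : MvPolynomial σ R, MvPolynomial.map φ q = p := by
  choose F hF using h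
  refine ⟨∑ m ∈ p.support, monomial m (F m), ?_⟩
  rw [map_sum]
  conv_rhs => rw [p.as_sum]
  refine Finset.sum_congr rfl fun m _ => ?_
  rw [map_monomial, hF]

/-- units in MvPolynomial over a field are nonzero constants -/
lemma isUnit_eq_C {F : Type*} [Field F] {r : ℕ} {p : MvPolynomial (Fin r) F}
    (h : IsUnit p) : ∃ c : F, IsUnit c ∧ p = C c := by
  induction r with
  | zero =>
    refine ⟨constantCoeff p, h.map constantCoeff, ?_⟩
    exact (eq_C_of_isEmpty p)
  | succ n ih =>
    have h2 : IsUnit (finSuccEquiv F n p) := h.map (finSuccEquiv F n)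
    obtain ⟨q, hq, hqe⟩ := Polynomial.isUnit_iff.mp h2
    obtain ⟨c, hc, rfl⟩ := ih hq
    refine ⟨c, hc, ?_⟩
    have h3 : (finSuccEquiv F n).symm (Polynomial.C (C c)) = C c :=
      RingHom.congr_fun (finSuccEquiv_comp_C_eq_C n) c
    rw [← h3, hqe, AlgEquiv.symm_apply_apply]

/-- a nonzero nonunit mv polynomial over a field has a nonzero coefficient at a nonzero monomial -/
lemma exists_ne_zero_coeff {F : Type*} [Field F] {r : ℕ} {p : MvPolynomial (Fin r) F}
    (h0 : p ≠ 0) (hu : ¬ IsUnit p) : ∃ μ : Fin r →₀ ℕ, μ ≠ 0 ∧ p.coeff μ ≠ 0 := by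
  by_contra hc
  push_neg at hc
  have : p = C (constantCoeff p) := by
    ext μ
    rw [coeff_C]
    split_ifs with hμ
    · subst hμ; rfl
    · exact hc μ (Ne.symm hμ)
  apply hu
  rw [this]
  have : constantCoeff p ≠ 0 := by
    intro hz
    rw [hz, map_zero] at this
    exact h0 this
  exact (isUnit_iff_ne_zero.mpr this).map C



/-- Lemma A : irreducible polys over an algebraically closed field stay irreducible
over any field extension. -/
lemma map_irreducible_of_isAlgClosed {F E : Type*} [Field F] [Field E] [IsAlgClosed F]
    (φ : F →+* E) {r : ℕ} {p : MvPolynomial (Fin r) F} (hp : Irreducible p) :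
    Irreducible (MvPolynomial.map φ p) := by
  letI : Algebra F E := φ.toAlgebra
  have hφ : (algebraMap F E) = φ := rfl
  have hinj : Function.Injective (MvPolynomial.map (σ := Fin r) φ) :=
    MvPolynomial.map_injective φ φ.injective
  constructor
  · -- map φ p is not a unit
    intro hu
    obtain ⟨c, hc, hce⟩ := isUnit_eq_C hu
    apply hp.not_isUnit
    have hpc : p = C (constantCoeff p) := by
      ext μ
      rw [coeff_C]
      split_ifs with hμ
      · subst hμ; rfl
      · have : φ (p.coeff μ) = 0 := by
          have := congrArg (fun q => MvPolynomial.coeff μ q) hce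
          simp only [coeff_map, coeff_C, if_neg hμ] at this
          exact this
        exact φ.injective (by rwa [map_zero])
    have hne : constantCoeff p ≠ 0 := by
      intro hz
      apply hp.ne_zero
      rw [hpc, hz, map_zero]
    rw [hpc]
    exact (isUnit_iff_ne_zero.mpr hne).map C
  · intro a b hab
    by_contra hcon
    push_neg at hcon
    obtain ⟨hua, hub⟩ := hcon
    have ha0 : a ≠ 0 := by
      rintro rfl
      rw [zero_mul] at hab
      exact hp.ne_zero (hinj (by rw [hab, map_zero]))
    have hb0 : b ≠ 0 := by
      rintro rfl
      rw [mul_zero] at hab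
      exact hp.ne_zero (hinj (by rw [hab, map_zero]))
    obtain ⟨μa, hμa, hca⟩ := exists_ne_zero_coeff ha0 hua
    obtain ⟨μb, hμb, hcb⟩ := exists_ne_zero_coeff hb0 hub
    -- the finitely generated subalgebra
    classical
    set sf : Finset E :=
      insert (a.coeff μa * b.coeff μb)⁻¹
        (a.support.image a.coeff ∪ b.support.image b.coeff) with hsf
    set R : Subalgebra F E := Algebra.adjoin F (↑sf : Set E) with hR
    haveI hft : Algebra.FiniteType F R :=
      (Subalgebra.fg_iff_finiteType R).mp (by rw [hR]; exact Subalgebra.fg_adjoin_finset sf)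
    have hmem : ∀ x ∈ sf, x ∈ R := fun x hx => Algebra.subset_adjoin hx
    have hacoeff : ∀ μ, a.coeff μ ∈ R := by
      intro μ
      by_cases hμ : μ ∈ a.support
      · exact hmem _ (Finset.mem_insert_of_mem (Finset.mem_union_left _
          (Finset.mem_image_of_mem _ hμ)))
      · rw [MvPolynomial.notMem_support_iff.mp hμ]; exact zero_mem R
    have hbcoeff : ∀ μ, b.coeff μ ∈ R := by
      intro μ
      by_cases hμ : μ ∈ b.support
      · exact hmem _ (Finset.mem_insert_of_mem (Finset.mem_union_right _
          (Finset.mem_image_of_mem _ hμ)))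
      · rw [MvPolynomial.notMem_support_iff.mp hμ]; exact zero_mem R
    have hinvmem : (a.coeff μa * b.coeff μb)⁻¹ ∈ R := hmem _ (Finset.mem_insert_self _ _)
    set v : R →+* E := (Subalgebra.val R).toRingHom with hv
    have hvinj : Function.Injective v := Subtype.val_injective
    obtain ⟨a₀, ha₀⟩ := descend_aux v a (fun μ => ⟨⟨a.coeff μ, hacoeff μ⟩, rfl⟩)
    obtain ⟨b₀, hb₀⟩ := descend_aux v b (fun μ => ⟨⟨b.coeff μ, hbcoeff μ⟩, rfl⟩)
    -- a₀ * b₀ = map (algebraMap F R) p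
    have hdesc : a₀ * b₀ = MvPolynomial.map (algebraMap F R) p := by
      apply MvPolynomial.map_injective v hvinj
      rw [map_mul, ha₀, hb₀, ← hab, MvPolynomial.map_map]
      have hcomp : v.comp (algebraMap F ↥R) = φ := RingHom.ext fun x => rfl
      rw [hcomp]
    -- get the character χ : R → F
    obtain ⟨m, hm⟩ := Ideal.exists_maximal R
    haveI := hm
    letI fQ : Field (R ⧸ m) := Ideal.Quotient.field m
    letI aQ : Algebra F (R ⧸ m) := Ideal.Quotient.algebra F
    haveI ftQ : Algebra.FiniteType F (R ⧸ m) :=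
      Algebra.FiniteType.of_surjective (Ideal.Quotient.mkₐ F m)
        Ideal.Quotient.mk_surjective
    haveI finQ : Module.Finite F (R ⧸ m) := finite_of_finite_type_of_isJacobsonRing F (R ⧸ m)
    haveI intQ : Algebra.IsIntegral F (R ⧸ m) := Algebra.IsIntegral.of_finite F (R ⧸ m)
    have hsurj : Function.Surjective (algebraMap F (R ⧸ m)) :=
      IsAlgClosed.algebraMap_bijective_of_isIntegral.2
    have hbij : Function.Bijective (algebraMap F (R ⧸ m)) :=
      ⟨(algebraMap F (R ⧸ m)).injective, hsurj⟩
    let e : F ≃+* (R ⧸ m) := RingEquiv.ofBijective _ hbij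
    let χ : R →+* F := e.symm.toRingHom.comp (Ideal.Quotient.mk m)
    have hχa : ∀ x : F, χ (algebraMap F R x) = x := by
      intro x
      show e.symm ((Ideal.Quotient.mk m) (algebraMap F R x)) = x
      have h1 : (Ideal.Quotient.mk m) (algebraMap F R x) = algebraMap F (R ⧸ m) x :=
        ((Ideal.Quotient.mkₐ F m).commutes x)
      rw [h1]
      exact e.symm_apply_apply x
    -- push the factorization to F
    have hfac : (MvPolynomial.map χ a₀) * (MvPolynomial.map χ b₀) = p := by
      rw [← map_mul, hdesc, MvPolynomial.map_map]
      have : χ.comp (algebraMap F R) = RingHom.id F := RingHom.ext hχa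
      rw [this, MvPolynomial.map_id]
    -- the coefficients at μa, μb survive
    have hα : v (a₀.coeff μa) = a.coeff μa := by rw [← MvPolynomial.coeff_map, ha₀]
    have hβ : v (b₀.coeff μb) = b.coeff μb := by rw [← MvPolynomial.coeff_map, hb₀]
    have hunit : a₀.coeff μa * b₀.coeff μb * ⟨_, hinvmem⟩ = 1 := by
      apply hvinj
      rw [map_mul, map_mul, hα, hβ, map_one]
      show (a.coeff μa * b.coeff μb) * (a.coeff μa * b.coeff μb)⁻¹ = 1
      exact mul_inv_cancel₀ (mul_ne_zero hca hcb)
    have hχα : χ (a₀.coeff μa) ≠ 0 := by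
      intro hz
      have := congrArg χ hunit
      rw [map_mul, map_mul, hz, zero_mul, zero_mul, map_one] at this
      exact zero_ne_one this
    have hχβ : χ (b₀.coeff μb) ≠ 0 := by
      intro hz
      have := congrArg χ hunit
      rw [map_mul, map_mul, hz, mul_zero, zero_mul, map_one] at this
      exact zero_ne_one this
    rcases hp.isUnit_or_isUnit hfac.symm with hu | hu
    · obtain ⟨c, _, hce⟩ := isUnit_eq_C hu
      have h2 := congrArg (MvPolynomial.coeff μa) hce
      rw [coeff_map, coeff_C, if_neg (show ¬ (0 = μa) from fun h => hμa h.symm)] at h2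
      exact hχα h2
    · obtain ⟨c, _, hce⟩ := isUnit_eq_C hu
      have h2 := congrArg (MvPolynomial.coeff μb) hce
      rw [coeff_map, coeff_C, if_neg (show ¬ (0 = μb) from fun h => hμb h.symm)] at h2
      exact hχβ h2



/-- Lemma B : if every irreducible factor of `a` is associated to the image of a polynomial
from downstairs, then `a` is a constant times an image from downstairs. -/
lemma eq_C_mul_map {M Ω : Type*} [Field M] [Field Ω] (ψ : M →+* Ω) {r : ℕ}
    (a : MvPolynomial (Fin r) Ω)
    (H : ∀ t : MvPolynomial (Fin r) Ω, Irreducible t → t ∣ a →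
      ∃ m : MvPolynomial (Fin r) M, Associated (MvPolynomial.map ψ m) t) :
    ∃ (c : Ω) (m : MvPolynomial (Fin r) M), a = C c * MvPolynomial.map ψ m := by
  induction a using UniqueFactorizationMonoid.induction_on_prime with
  | h₁ => exact ⟨0, 1, by rw [map_zero, zero_mul]⟩
  | h₂ x hx =>
    obtain ⟨c, _, rfl⟩ := isUnit_eq_C hx
    exact ⟨c, 1, by rw [map_one, mul_one]⟩
  | h₃ a p ha hp ih =>
    have Ha : ∀ t : MvPolynomial (Fin r) Ω, Irreducible t → t ∣ a →
        ∃ m : MvPolynomial (Fin r) M, Associated (MvPolynomial.map ψ m) t :=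
      fun t ht htd => H t ht (htd.mul_left p)
    obtain ⟨c, m, rfl⟩ := ih Ha
    obtain ⟨m', hm'⟩ := H p hp.irreducible (Dvd.intro _ rfl)
    obtain ⟨u, hu⟩ := hm'
    obtain ⟨e, _, he⟩ := isUnit_eq_C u.isUnit
    refine ⟨e * c, m' * m, ?_⟩
    rw [← hu, he, map_mul, map_mul]
    ring


theorem stmt_8 (K K' : Type*) [Field K] [Field K'] [Algebra K K']
    (halg : ∀ z : K', IsAlgebraic K z → z ∈ Set.range (algebraMap K K'))
    (r : ℕ) (f : MvPolynomial (Fin r) K) (hf : Irreducible f)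
    (hconst : MvPolynomial.coeff 0 f = 1) :
    Irreducible (MvPolynomial.map (algebraMap K K') f) := by
  classical
  set Ω := AlgebraicClosure K' with hΩ
  set M := AlgebraicClosure K with hM
  let ψa : M →ₐ[K] Ω := IsAlgClosed.lift
  let ψ : M →+* Ω := ψa.toRingHom
  have hψcomp : ψ.comp (algebraMap K M) = algebraMap K Ω := by
    ext x
    exact ψa.commutes x
  have hι : Function.Injective (algebraMap K K') := (algebraMap K K').injective
  have hιΩ : Function.Injective (algebraMap K' Ω) := (algebraMap K' Ω).injective
  have hmapinj : Function.Injective (MvPolynomial.map (σ := Fin r) (algebraMap K K')) :=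
    MvPolynomial.map_injective _ hι
  have hmapinjΩ : Function.Injective (MvPolynomial.map (σ := Fin r) (algebraMap K' Ω)) :=
    MvPolynomial.map_injective _ hιΩ
  have hcc : constantCoeff f = 1 := hconst
  constructor
  · -- not a unit
    intro hu
    obtain ⟨c, _, hce⟩ := isUnit_eq_C hu
    have hc1 : c = 1 := by
      have := congrArg constantCoeff hce
      rw [constantCoeff_map, hcc, map_one, constantCoeff_C] at this
      exact this.symm
    apply hf.not_isUnit
    have : MvPolynomial.map (algebraMap K K') f = MvPolynomial.map (algebraMap K K') 1 := by
      rw [hce, hc1, map_one, map_one]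
    rw [hmapinj this]
    exact isUnit_one
  · intro g h hgh
    -- constant coefficients
    have hcgh : constantCoeff g * constantCoeff h = 1 := by
      have := congrArg constantCoeff hgh
      rw [constantCoeff_map, hcc, map_one, map_mul] at this
      exact this.symm
    have hcg : constantCoeff g ≠ 0 := left_ne_zero_of_mul_eq_one hcgh
    have hch : constantCoeff h ≠ 0 := right_ne_zero_of_mul_eq_one hcgh
    -- the factorization upstairs
    have hfM : MvPolynomial.map (algebraMap K M) f ≠ 0 := fun hz =>
      hf.ne_zero (MvPolynomial.map_injective _ (algebraMap K M).injective
        (by rw [hz, map_zero]))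
    set fM := MvPolynomial.map (algebraMap K M) f with hfMdef
    have hfMΩ : MvPolynomial.map ψ fM = MvPolynomial.map (algebraMap K Ω) f := by
      rw [hfMdef, MvPolynomial.map_map, hψcomp]
    have hfΩ : MvPolynomial.map (algebraMap K Ω) f =
        MvPolynomial.map (algebraMap K' Ω) g * MvPolynomial.map (algebraMap K' Ω) h := by
      rw [← map_mul, ← hgh, MvPolynomial.map_map,
        IsScalarTower.algebraMap_eq K K' Ω]
    -- key: every irreducible divisor of (map _ g) or (map _ h) is assoc to image of ψ
    have key : ∀ t : MvPolynomial (Fin r) Ω, Irreducible t →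
        t ∣ MvPolynomial.map (algebraMap K Ω) f →
        ∃ m : MvPolynomial (Fin r) M, Associated (MvPolynomial.map ψ m) t := by
      intro t ht htd
      rw [← hfMΩ] at htd
      obtain ⟨u, hu⟩ := UniqueFactorizationMonoid.factors_prod hfM
      have htp : Prime t := UniqueFactorizationMonoid.irreducible_iff_prime.mp ht
      have hdvd2 : t ∣ ((UniqueFactorizationMonoid.factors fM).map
          (MvPolynomial.map ψ)).prod := by
        have h1 : MvPolynomial.map ψ fM =
            ((UniqueFactorizationMonoid.factors fM).map (MvPolynomial.map ψ)).prod *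
              MvPolynomial.map ψ ↑u := by
          rw [← map_multiset_prod, ← map_mul, hu]
        have h2 : IsUnit (MvPolynomial.map ψ (↑u : MvPolynomial (Fin r) M)) :=
          u.isUnit.map (MvPolynomial.map ψ)
        have h3 : Associated (((UniqueFactorizationMonoid.factors fM).map
            (MvPolynomial.map ψ)).prod) (MvPolynomial.map ψ fM) := by
          rw [h1]
          exact associated_mul_unit_right _ _ h2
        exact (dvd_of_eq rfl).trans (htd.trans h3.symm.dvd)
      obtain ⟨w, hw, hdw⟩ := htp.exists_mem_multiset_dvd hdvd2
      obtain ⟨p0, hp0, rfl⟩ := Multiset.mem_map.mp hw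
      have hirr : Irreducible (MvPolynomial.map ψ p0) :=
        map_irreducible_of_isAlgClosed ψ
          (UniqueFactorizationMonoid.irreducible_of_factor p0 hp0)
      exact ⟨p0, (ht.associated_of_dvd hirr hdw).symm⟩
    -- apply Lemma B to g and h
    have keyg : ∀ t : MvPolynomial (Fin r) Ω, Irreducible t →
        t ∣ MvPolynomial.map (algebraMap K' Ω) g →
        ∃ m : MvPolynomial (Fin r) M, Associated (MvPolynomial.map ψ m) t :=
      fun t ht htd => key t ht (by rw [hfΩ]; exact htd.mul_right _)
    have keyh : ∀ t : MvPolynomial (Fin r) Ω, Irreducible t →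
        t ∣ MvPolynomial.map (algebraMap K' Ω) h →
        ∃ m : MvPolynomial (Fin r) M, Associated (MvPolynomial.map ψ m) t :=
      fun t ht htd => key t ht (by rw [hfΩ]; exact htd.mul_left _)
    obtain ⟨c, m, hcm⟩ := eq_C_mul_map ψ _ keyg
    obtain ⟨d, n, hdn⟩ := eq_C_mul_map ψ _ keyh
    -- normalize g and h by their constant coefficients
    set cg := constantCoeff g with hcgdef
    set ch := constantCoeff h with hchdef
    -- constant coefficient identities
    have hgc : algebraMap K' Ω cg = c * ψ (constantCoeff m) := by
      have := congrArg constantCoeff hcm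
      rwa [constantCoeff_map, map_mul, constantCoeff_C, constantCoeff_map] at this
    have hhc : algebraMap K' Ω ch = d * ψ (constantCoeff n) := by
      have := congrArg constantCoeff hdn
      rwa [constantCoeff_map, map_mul, constantCoeff_C, constantCoeff_map] at this
    have hgcne : algebraMap K' Ω cg ≠ 0 := fun hz => hcg (hιΩ (by rw [hz, map_zero]))
    have hhcne : algebraMap K' Ω ch ≠ 0 := fun hz => hch (hιΩ (by rw [hz, map_zero]))
    have hcne : c ≠ 0 := fun hz => hgcne (by rw [hgc, hz, zero_mul])
    have hdne : d ≠ 0 := fun hz => hhcne (by rw [hhc, hz, zero_mul])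
    have hψm : ψ (constantCoeff m) ≠ 0 := fun hz => hgcne (by rw [hgc, hz, mul_zero])
    have hψn : ψ (constantCoeff n) ≠ 0 := fun hz => hhcne (by rw [hhc, hz, mul_zero])
    -- the normalized polynomials
    set g1 : MvPolynomial (Fin r) K' := C cg⁻¹ * g with hg1
    set h1 : MvPolynomial (Fin r) K' := C ch⁻¹ * h with hh1
    have hg1m : MvPolynomial.map (algebraMap K' Ω) g1 =
        MvPolynomial.map ψ (C (constantCoeff m)⁻¹ * m) := by
      rw [hg1, map_mul, map_mul, MvPolynomial.map_C, MvPolynomial.map_C, hcm,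
        ← mul_assoc, ← C_mul]
      have hval : (algebraMap K' Ω) cg⁻¹ * c = ψ (constantCoeff m)⁻¹ := by
        rw [map_inv₀, map_inv₀, hgc]
        rw [mul_inv, mul_comm c⁻¹, mul_assoc, inv_mul_cancel₀ hcne, mul_one]
      rw [hval]
    have hh1m : MvPolynomial.map (algebraMap K' Ω) h1 =
        MvPolynomial.map ψ (C (constantCoeff n)⁻¹ * n) := by
      rw [hh1, map_mul, map_mul, MvPolynomial.map_C, MvPolynomial.map_C, hdn,
        ← mul_assoc, ← C_mul]
      have hval : (algebraMap K' Ω) ch⁻¹ * d = ψ (constantCoeff n)⁻¹ := by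
        rw [map_inv₀, map_inv₀, hhc]
        rw [mul_inv, mul_comm d⁻¹, mul_assoc, inv_mul_cancel₀ hdne, mul_one]
      rw [hval]
    -- coefficients of g1 and h1 are in the image of K
    have hdesc : ∀ (q1 : MvPolynomial (Fin r) K') (m1 : MvPolynomial (Fin r) M),
        MvPolynomial.map (algebraMap K' Ω) q1 = MvPolynomial.map ψ m1 →
        ∀ μ, q1.coeff μ ∈ Set.range (algebraMap K K') := by
      intro q1 m1 hq1 μ
      apply halg
      have h1 : algebraMap K' Ω (q1.coeff μ) = ψ (m1.coeff μ) := by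
        rw [← MvPolynomial.coeff_map, ← MvPolynomial.coeff_map, hq1]
      have h2 : IsAlgebraic K (ψ (m1.coeff μ)) :=
        (Algebra.IsAlgebraic.isAlgebraic (R := K) (m1.coeff μ)).algHom ψa
      rw [← h1] at h2
      exact (isAlgebraic_algebraMap_iff hιΩ).mp h2
    obtain ⟨P₀, hP₀⟩ := descend_aux (algebraMap K K') g1 (hdesc g1 _ hg1m)
    obtain ⟨Q₀, hQ₀⟩ := descend_aux (algebraMap K K') h1 (hdesc h1 _ hh1m)
    -- f = P₀ * Q₀
    have hfPQ : f = P₀ * Q₀ := by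
      apply hmapinj
      rw [map_mul, hP₀, hQ₀, hgh, hg1, hh1]
      rw [mul_mul_mul_comm, ← C_mul]
      have : cg⁻¹ * ch⁻¹ = 1 := by
        rw [← mul_inv]
        rw [hcgh]
        exact inv_one
      rw [this, map_one, one_mul]
    rcases hf.isUnit_or_isUnit hfPQ with hu | hu
    · left
      obtain ⟨k, hk, hke⟩ := isUnit_eq_C hu
      have hg1C : g1 = C (algebraMap K K' k) := by
        rw [← hP₀, hke, MvPolynomial.map_C]
      have : g = C (cg * algebraMap K K' k) := by
        have h5 : C cg * g1 = g := by
          rw [hg1, ← mul_assoc, ← C_mul, mul_inv_cancel₀ hcg, C_1, one_mul]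
        rw [← h5, hg1C, ← C_mul]
      rw [this]
      have hkne : algebraMap K K' k ≠ 0 := fun hz =>
        hk.ne_zero (hι (by rw [hz, map_zero]))
      exact (isUnit_iff_ne_zero.mpr (mul_ne_zero hcg hkne)).map C
    · right
      obtain ⟨k, hk, hke⟩ := isUnit_eq_C hu
      have hh1C : h1 = C (algebraMap K K' k) := by
        rw [← hQ₀, hke, MvPolynomial.map_C]
      have : h = C (ch * algebraMap K K' k) := by
        have h5 : C ch * h1 = h := by
          rw [hh1, ← mul_assoc, ← C_mul, mul_inv_cancel₀ hch, C_1, one_mul]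
        rw [← h5, hh1C, ← C_mul]
      rw [this]
      have hkne : algebraMap K K' k ≠ 0 := fun hz =>
        hk.ne_zero (hι (by rw [hz, map_zero]))
      exact (isUnit_iff_ne_zero.mpr (mul_ne_zero hch hkne)).map C
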